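/- Let $E_0 > 0$, $v > 0$, $W_0 \in \mathbb{C}$ with $W_0 \neq 0$, and let $c, C_1, C_2, \rho > 0$. Then there exists $\varepsilon > 0$, depending only on $c$, $C_1$, $C_2$, with the following property: for every $h \in (0,1)$ with $\varepsilon h \le \rho$, every $E_1 \in \mathbb{C}$, and every function $S$ holomorphic on the ball $B(E_1,\rho)$ satisfying $c \le |S'(E)| \le C_1$ and $|S''(E)| \le C_2$ on $B(E_1,\rho)$, if $C_0(E_1;h) = 1$ then $E_1$ is the unique solution of the equation $C_0(E;h) = 1$ in the ball $\{E : |E - E_1| \le \varepsilon h\}$. -/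

import Mathlib

/-- Local uniqueness (separation) of pseudo-resonances at scale `εh`: there exists `ε > 0`
(depending only on `c, C₁, C₂`) such that if `S` is holomorphic on `B(E₁,ρ)` with
`c ≤ |S'| ≤ C₁` and `|S''| ≤ C₂` there and `C₀(E₁;h) = 1`, then `E₁` is the unique solution
of `C₀(E;h) = 1` in the closed ball `|E - E₁| ≤ εh`. -/
theorem stmt_4 (E0 v : ℝ) (hE0 : 0 < E0) (hv : 0 < v)
    (W0 : ℂ) (hW0 : W0 ≠ 0) (c C1 C2 ρ : ℝ)
    (hc : 0 < c) (hC1 : 0 < C1) (hC2 : 0 < C2) (hρ : 0 < ρ) :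
    ∃ ε > 0, ∀ h ∈ Set.Ioo (0:ℝ) 1, ε * h ≤ ρ → ∀ E1 : ℂ, ∀ S : ℂ → ℂ,
      DifferentiableOn ℂ S (Metric.ball E1 ρ) →
      (∀ E ∈ Metric.ball E1 ρ, c ≤ ‖deriv S E‖ ∧ ‖deriv S E‖ ≤ C1) →
      (∀ E ∈ Metric.ball E1 ρ, ‖deriv (deriv S) E‖ ≤ C2) →
      Complex.I * h * Real.pi * W0 * Complex.exp (Complex.I * S E1 / h) / (v * Real.sqrt E0)
        = 1 →
      ∀ E : ℂ, ‖E - E1‖ ≤ ε * h →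
        (Complex.I * h * Real.pi * W0 * Complex.exp (Complex.I * S E / h) /
            (v * Real.sqrt E0) = 1 ↔ E = E1) := by
  refine ⟨min ρ (min (1/C1) (c/(2*C2))), by positivity, ?_⟩
  rintro h ⟨hh0, hh1⟩ hρh E1 S hS hS1 hS2 hE1eq E hE
  set ε : ℝ := min ρ (min (1/C1) (c/(2*C2))) with hεdef
  have hε0 : 0 < ε := by positivity
  constructor
  · intro hEeq
    -- strict inclusion of closed ball εh into ball ρ
    have hεh_lt : ε * h < ρ := by
      calc ε * h ≤ ρ * h := by
            exact mul_le_mul_of_nonneg_right (min_le_left _ _) hh0.le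
        _ < ρ := by nlinarith
    have hsub : Metric.closedBall E1 (ε * h) ⊆ Metric.ball E1 ρ :=
      Metric.closedBall_subset_ball hεh_lt
    have hEK : E ∈ Metric.closedBall E1 (ε * h) := by
      simpa [Metric.mem_closedBall, dist_eq_norm] using hE
    have hE1K : E1 ∈ Metric.closedBall E1 (ε * h) := Metric.mem_closedBall_self (by positivity)
    have hE1ball : E1 ∈ Metric.ball E1 ρ := Metric.mem_ball_self hρ
    -- from the two equations, exp's are equal
    have hvE0 : (v : ℂ) * Real.sqrt E0 ≠ 0 := by
      have : (0:ℝ) < v * Real.sqrt E0 := by positivity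
      exact_mod_cast ne_of_gt (by exact_mod_cast this)
    have hh0' : (h : ℂ) ≠ 0 := by exact_mod_cast ne_of_gt hh0
    have hpre : Complex.I * h * Real.pi * W0 ≠ 0 := by
      have hπ : (Real.pi : ℂ) ≠ 0 := by exact_mod_cast Real.pi_ne_zero
      exact mul_ne_zero (mul_ne_zero (mul_ne_zero Complex.I_ne_zero hh0') hπ) hW0
    have hexp_eq : Complex.exp (Complex.I * S E / h) = Complex.exp (Complex.I * S E1 / h) := by
      have heq := hEeq.trans hE1eq.symm
      rw [div_left_inj' hvE0] at heq
      exact mul_left_cancel₀ hpre heq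
    obtain ⟨n, hn⟩ := Complex.exp_eq_exp_iff_exists_int.mp hexp_eq
    -- S E - S E1 = n * 2π * h
    have hdiff : S E - S E1 = (n : ℂ) * (2 * Real.pi) * h := by
      have : Complex.I * S E / h - Complex.I * S E1 / h = n * (2 * Real.pi * Complex.I) := by
        rw [hn]; ring
      have h3 : Complex.I * (S E - S E1) = n * (2 * Real.pi * Complex.I) * h := by
        field_simp at this
        linear_combination Complex.I * this
      have h4 : Complex.I * (S E - S E1) = Complex.I * ((n:ℂ) * (2*Real.pi) * h) := by
        rw [h3]; ring
      exact mul_left_cancel₀ Complex.I_ne_zero h4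
    -- upper bound: ‖S E - S E1‖ ≤ C1 * εh ≤ h
    have hdiffS : ∀ x ∈ Metric.closedBall E1 (ε * h), DifferentiableAt ℂ S x := fun x hx =>
      hS.differentiableAt (Metric.isOpen_ball.mem_nhds (hsub hx))
    have hub : ‖S E - S E1‖ ≤ C1 * ‖E - E1‖ := by
      apply Convex.norm_image_sub_le_of_norm_deriv_le hdiffS
        (fun x hx => by
          simpa using (hS1 x (hsub hx)).2)
        (convex_closedBall _ _) hE1K hEK
    have hnormE : ‖E - E1‖ ≤ ε * h := by simpa using hE
    have hC1ε : C1 * ε ≤ 1 := by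
      have : ε ≤ 1 / C1 := le_trans (min_le_right _ _) (min_le_left _ _)
      rw [mul_comm]
      exact (le_div_iff₀ hC1).mp this
    have hub2 : ‖S E - S E1‖ ≤ h := by
      calc ‖S E - S E1‖ ≤ C1 * (ε * h) :=
            hub.trans (mul_le_mul_of_nonneg_left hnormE hC1.le)
        _ = (C1 * ε) * h := by ring
        _ ≤ 1 * h := mul_le_mul_of_nonneg_right hC1ε hh0.le
        _ = h := one_mul h
    -- hence n = 0
    have hn0 : n = 0 := by
      by_contra hne
      have h1n : (1:ℝ) ≤ |(n:ℝ)| := by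
        have := Int.one_le_abs (by exact_mod_cast hne : n ≠ 0)
        exact_mod_cast this
      have : ‖S E - S E1‖ = |(n:ℝ)| * (2 * Real.pi) * h := by
        rw [hdiff]
        have : ((n:ℂ) * (2 * Real.pi) * h) = (((n:ℝ) * (2*Real.pi) * h : ℝ) : ℂ) := by
          push_cast; ring
        rw [this, Complex.norm_real, Real.norm_eq_abs, abs_mul, abs_mul, abs_of_pos hh0,
          abs_of_pos (by positivity : (0:ℝ) < 2*Real.pi)]
      nlinarith [Real.pi_gt_three, hub2, this, hh0,
        mul_le_mul_of_nonneg_right h1n (by positivity : (0:ℝ) ≤ 2*Real.pi*h)]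
    have hSE : S E = S E1 := by
      have := hdiff
      rw [hn0] at this
      simpa [sub_eq_zero] using this
    -- lower bound argument: g z = S z - S'(E1) z
    set g : ℂ → ℂ := fun z => S z - deriv S E1 * z with hg
    have hderiv_g : ∀ x ∈ Metric.closedBall E1 (ε * h),
        deriv g x = deriv S x - deriv S E1 := by
      intro x hx
      have h1 : DifferentiableAt ℂ S x := hdiffS x hx
      have h2 : DifferentiableAt ℂ (fun z : ℂ => deriv S E1 * z) x := by fun_prop
      rw [hg]
      rw [deriv_fun_sub h1 h2, deriv_const_mul _ (differentiableAt_fun_id), deriv_id'', mul_one]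
    -- deriv S is Lipschitz with constant C2 on the closed ball
    have hanal : AnalyticOnNhd ℂ S (Metric.ball E1 ρ) :=
      hS.analyticOnNhd Metric.isOpen_ball
    have hdS_diff : ∀ x ∈ Metric.closedBall E1 (ε * h), DifferentiableAt ℂ (deriv S) x :=
      fun x hx => (hanal.deriv x (hsub hx)).differentiableAt
    have hlip : ∀ x ∈ Metric.closedBall E1 (ε * h),
        ‖deriv S x - deriv S E1‖ ≤ C2 * (ε * h) := by
      intro x hx
      have := Convex.norm_image_sub_le_of_norm_deriv_le hdS_diff
        (fun y hy => by simpa using hS2 y (hsub hy))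
        (convex_closedBall _ _) hE1K hx
      calc ‖deriv S x - deriv S E1‖ ≤ C2 * ‖x - E1‖ := this
        _ ≤ C2 * (ε * h) := by
            apply mul_le_mul_of_nonneg_left _ hC2.le
            simpa [dist_eq_norm] using hx
    have hgdiff : ∀ x ∈ Metric.closedBall E1 (ε * h), DifferentiableAt ℂ g x := by
      intro x hx
      exact (hdiffS x hx).sub (by fun_prop)
    have hgmv : ‖g E - g E1‖ ≤ (C2 * (ε * h)) * ‖E - E1‖ :=
      Convex.norm_image_sub_le_of_norm_deriv_le hgdiff
        (fun x hx => by rw [hderiv_g x hx]; exact hlip x hx)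
        (convex_closedBall _ _) hE1K hEK
    have hgval : g E - g E1 = - (deriv S E1 * (E - E1)) := by
      rw [hg]; simp only []; rw [hSE]; ring
    have hlow : c * ‖E - E1‖ ≤ (C2 * (ε * h)) * ‖E - E1‖ := by
      have h1 : ‖g E - g E1‖ = ‖deriv S E1‖ * ‖E - E1‖ := by
        rw [hgval, norm_neg, norm_mul]
      have h2 : c ≤ ‖deriv S E1‖ := by
        simpa using (hS1 E1 hE1ball).1
      calc c * ‖E - E1‖ ≤ ‖deriv S E1‖ * ‖E - E1‖ :=
            mul_le_mul_of_nonneg_right h2 (norm_nonneg _)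
        _ = ‖g E - g E1‖ := h1.symm
        _ ≤ (C2 * (ε * h)) * ‖E - E1‖ := hgmv
    have hεc : C2 * (ε * h) < c := by
      have hεle : ε ≤ c / (2*C2) := le_trans (min_le_right _ _) (min_le_right _ _)
      have : C2 * ε ≤ c / 2 := by
        have := mul_le_mul_of_nonneg_left hεle hC2.le
        calc C2 * ε ≤ C2 * (c / (2*C2)) := this
          _ = c / 2 := by field_simp
      nlinarith
    have hnz : ‖E - E1‖ = 0 := by nlinarith [norm_nonneg (E - E1)]
    simpa [sub_eq_zero] using hnz
  · rintro rfl
    exact hE1eq
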